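/- Let A = [[1,1],[1,2]], B = [[2,1],[1,1]], and let z be any word over {a,b} with associated matrix product M(z). Then there exists a positive integer t such that A·M(z)·B − B·M(z̄)·A = t·U, where z̄ is the reversal of z and U = [[0,-1],[1,0]]. -/
import Mathlib


def A : Matrix (Fin 2) (Fin 2) ℤ := !![1,1;1,2]
def B : Matrix (Fin 2) (Fin 2) ℤ := !![2,1;1,1]
/-- matrix of a word: `false` is the letter `a`, `true` is the letter `b` -/
def Mw (w : List Bool) : Matrix (Fin 2) (Fin 2) ℤ :=
  (w.map (fun x => if x then B else A)).prod
/-- the m-value: the top-right entry -/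
def mval (w : List Bool) : ℤ := Mw w 0 1
def U : Matrix (Fin 2) (Fin 2) ℤ := !![0,-1;1,0]
def J : Matrix (Fin 2) (Fin 2) ℤ := !![0,1;1,0]
/-- reversal with letters exchanged -/
def Ebar (w : List Bool) : List Bool := (w.map (fun x => !x)).reverse
def pell : ℕ → ℕ
  | 0 => 0
  | 1 => 1
  | n+2 => 2 * pell (n+1) + pell n

open Matrix in
lemma key (P : Matrix (Fin 2) (Fin 2) ℤ) :
    A * P * B - B * Pᵀ * A = (P 0 0 + 3 * P 1 0 + P 1 1) • U := by
  ext i j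
  fin_cases i <;> fin_cases j <;>
    simp [A, B, U, Matrix.mul_apply, Matrix.transpose_apply, Fin.sum_univ_two,
      Matrix.vecMul, dotProduct, Matrix.vecHead, Matrix.vecTail] <;>
    ring

lemma Mw_cons (x : Bool) (l : List Bool) :
    Mw (x :: l) = (if x then B else A) * Mw l := by
  simp [Mw]

lemma Mw_append (u v : List Bool) : Mw (u ++ v) = Mw u * Mw v := by
  simp [Mw]

open Matrix in
lemma Mw_reverse (l : List Bool) : Mw l.reverse = (Mw l)ᵀ := by
  induction l with
  | nil => simp [Mw, Matrix.transpose_one]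
  | cons x l ih =>
    rw [List.reverse_cons, Mw_append, ih]
    conv_rhs => rw [Mw_cons, Matrix.transpose_mul]
    congr 1
    cases x <;> simp [Mw, A, B] <;> ext i j <;> fin_cases i <;> fin_cases j <;> rfl

lemma Mw_pos (l : List Bool) :
    1 ≤ Mw l 0 0 ∧ 0 ≤ Mw l 0 1 ∧ 0 ≤ Mw l 1 0 ∧ 1 ≤ Mw l 1 1 := by
  induction l with
  | nil => simp [Mw]
  | cons x l ih =>
    obtain ⟨h1, h2, h3, h4⟩ := ih
    rw [Mw_cons]
    cases x <;>
      simp [A, B, Matrix.mul_apply, Fin.sum_univ_two, Matrix.vecMul,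
        dotProduct, Matrix.vecHead, Matrix.vecTail] <;>
      exact ⟨by linarith, by linarith, by linarith, by linarith⟩

theorem stmt6 (z : List Bool) :
    ∃ t : ℤ, 0 < t ∧ A * Mw z * B - B * Mw z.reverse * A = t • U := by
  obtain ⟨h1, h2, h3, h4⟩ := Mw_pos z
  exact ⟨Mw z 0 0 + 3 * Mw z 1 0 + Mw z 1 1, by linarith,
    by rw [Mw_reverse]; exact key (Mw z)⟩
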